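/- Let U_L, U_H > 0 be the utilities of two generative AI models and p_L, p_H > 0 their prompt prices. For ε ∈ (0,1) define the user's optimal payoff V(ε) = max over s ∈ {L, H} and n ∈ ℕ of (1 − ε^n)·U_s − n·p_s (this maximum exists since the payoff tends to −∞ as n → ∞). Then V is nonincreasing on (0,1); moreover, for ε₁ < ε₂ in (0,1), if p_s < (1 − ε₁)·U_s for some s ∈ {L, H}, then V(ε₁) > V(ε₂). -/
import Mathlib


/-- Proposition 2 of the paper: with two models of utilities
`U_L, U_H > 0` and prices `p_L, p_H > 0`, let `V ε` be the user's optimal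
payoff, i.e. the maximum of `(1 - ε^n)·U_s - n·p_s` over `s ∈ {L,H}` and
`n ∈ ℕ`. Then `V` is nonincreasing on `(0,1)`, and for `ε₁ < ε₂` in `(0,1)`,
if `p_s < (1-ε₁)·U_s` for some model `s`, then `V ε₁ > V ε₂`. -/
theorem user_optimal_payoff_antitone_in_ambiguity
    (UL UH pL pH : ℝ) (hUL : 0 < UL) (hUH : 0 < UH)
    (hpL : 0 < pL) (hpH : 0 < pH)
    (V : ℝ → ℝ)
    (hV : ∀ ε ∈ Set.Ioo (0 : ℝ) 1,
      IsGreatest {x : ℝ | ∃ n : ℕ,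
        x = (1 - ε ^ n) * UL - n * pL ∨ x = (1 - ε ^ n) * UH - n * pH} (V ε)) :
    (∀ ε₁ ∈ Set.Ioo (0 : ℝ) 1, ∀ ε₂ ∈ Set.Ioo (0 : ℝ) 1,
      ε₁ ≤ ε₂ → V ε₂ ≤ V ε₁) ∧
    (∀ ε₁ ∈ Set.Ioo (0 : ℝ) 1, ∀ ε₂ ∈ Set.Ioo (0 : ℝ) 1, ε₁ < ε₂ →
      (pL < (1 - ε₁) * UL ∨ pH < (1 - ε₁) * UH) → V ε₂ < V ε₁) := by
  constructor
  · intro ε₁ h₁ ε₂ h₂ hle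
    obtain ⟨⟨n, hn⟩, hub2⟩ := hV ε₂ h₂
    obtain ⟨hmem1, hub1⟩ := hV ε₁ h₁
    have hpow : ε₁ ^ n ≤ ε₂ ^ n := pow_le_pow_left₀ h₁.1.le hle n
    rcases hn with hn | hn
    · have : V ε₂ ≤ (1 - ε₁ ^ n) * UL - n * pL := by
        rw [hn]; nlinarith
      exact this.trans (hub1 ⟨n, Or.inl rfl⟩)
    · have : V ε₂ ≤ (1 - ε₁ ^ n) * UH - n * pH := by
        rw [hn]; nlinarith
      exact this.trans (hub1 ⟨n, Or.inr rfl⟩)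
  · intro ε₁ h₁ ε₂ h₂ hlt hcheap
    obtain ⟨⟨n, hn⟩, hub2⟩ := hV ε₂ h₂
    obtain ⟨hmem1, hub1⟩ := hV ε₁ h₁
    rcases Nat.eq_zero_or_pos n with hn0 | hn0
    · subst hn0
      have hV2 : V ε₂ = 0 := by
        rcases hn with hn | hn <;> simp [hn]
      rcases hcheap with hc | hc
      · have h1 : (1 - ε₁ ^ 1) * UL - (1:ℕ) * pL ≤ V ε₁ :=
          hub1 ⟨1, Or.inl rfl⟩
        have : (0:ℝ) < (1 - ε₁ ^ 1) * UL - (1:ℕ) * pL := by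
          push_cast; nlinarith
        linarith
      · have h1 : (1 - ε₁ ^ 1) * UH - (1:ℕ) * pH ≤ V ε₁ :=
          hub1 ⟨1, Or.inr rfl⟩
        have : (0:ℝ) < (1 - ε₁ ^ 1) * UH - (1:ℕ) * pH := by
          push_cast; nlinarith
        linarith
    · have hpow : ε₁ ^ n < ε₂ ^ n :=
        pow_lt_pow_left₀ hlt h₁.1.le hn0.ne'
      rcases hn with hn | hn
      · have h1 : (1 - ε₁ ^ n) * UL - n * pL ≤ V ε₁ := hub1 ⟨n, Or.inl rfl⟩
        have : V ε₂ < (1 - ε₁ ^ n) * UL - n * pL := by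
          rw [hn]; nlinarith
        linarith
      · have h1 : (1 - ε₁ ^ n) * UH - n * pH ≤ V ε₁ := hub1 ⟨n, Or.inr rfl⟩
        have : V ε₂ < (1 - ε₁ ^ n) * UH - n * pH := by
          rw [hn]; nlinarith
        linarith
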